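/- For $0 < r_1 < r_2$ and a source point $x$ with $\|x\| \le r_1$, the function $y \mapsto 1/\|y - x\|$ on the sphere $\|y\| = r_2$ admits the bound $\left|\frac{1}{\|y-x\|} - \sum_{l=0}^{c} \frac{\|x\|^l}{r_2^{l+1}} P_l(\cos\theta)\right| \le \frac{1}{r_2 - r_1}\left(\frac{r_1}{r_2}\right)^{c+1}$, where $\theta$ is the angle between $x$ and $y$ and $P_l$ are the Legendre polynomials. -/

import Mathlib

open scoped RealInnerProductSpace

noncomputable section

/-- The Legendre polynomial of degree `n`, via the Rodrigues formula. -/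
def legendre (n : ℕ) : Polynomial ℝ :=
  (1 / ((2 : ℝ) ^ n * n.factorial)) • Polynomial.derivative^[n] ((Polynomial.X ^ 2 - 1) ^ n)

open Polynomial
namespace MP

lemma iterX (m : ℕ) (f : ℝ[X]) :
    derivative^[m+1] (X * f) = X * derivative^[m+1] f + (m+1) • derivative^[m] f := by
  induction m generalizing f with
  | zero => simp [derivative_mul]; try ring
  | succ m ih =>
    rw [Function.iterate_succ_apply' derivative (m+1), ih, map_add, derivative_mul, derivative_X,
      one_mul, derivative_smul, ← Function.iterate_succ_apply' derivative (m+1),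
      ← Function.iterate_succ_apply' derivative m]
    simp only [nsmul_eq_mul]; push_cast; ring

lemma derivX2 : derivative ((X:ℝ[X])^2 - 1) = 2*X := by
  simp [derivative_X_pow, map_ofNat]; norm_num

lemma iterQ (m : ℕ) (f : ℝ[X]) :
    derivative^[m+2] ((X^2 - 1) * f) = (X^2-1) * derivative^[m+2] f
      + (2*(m+2)) • (X * derivative^[m+1] f) + ((m+2)*(m+1)) • derivative^[m] f := by
  induction m generalizing f with
  | zero =>
    simp only [Function.iterate_succ_apply, Function.iterate_zero_apply, Function.iterate_one]
    simp [derivative_mul, derivative_X_pow, nsmul_eq_mul, C_eq_natCast, map_ofNat]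
    push_cast; ring
  | succ m ih =>
    rw [Function.iterate_succ_apply' derivative (m+2), ih, map_add, map_add, derivative_mul,
      derivative_smul, derivative_smul, derivative_mul, derivative_X, one_mul,
      ← Function.iterate_succ_apply' derivative (m+2), ← Function.iterate_succ_apply' derivative (m+1),
      ← Function.iterate_succ_apply' derivative m, derivX2]
    simp only [nsmul_eq_mul]; push_cast; ring

/-- `V n = (X²-1)^n` -/
def V (n : ℕ) : ℝ[X] := ((X:ℝ[X])^2 - 1)^n

/-- `W n = Dⁿ Vₙ` -/
def W (n : ℕ) : ℝ[X] := derivative^[n] (V n)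

lemma derivV (n : ℕ) : derivative (V (n+1)) = (2*(n+1)) • (X * V n) := by
  rw [V, derivative_pow, derivX2, V]
  simp only [nsmul_eq_mul, C_eq_natCast]; push_cast; ring


lemma W_zero : W 0 = 1 := by simp [W, V]
lemma W_one : W 1 = 2 * X := by
  simp only [W, V, pow_one, Function.iterate_one, derivX2]

lemma one' (n : ℕ) : W (n+2) = (X^2-1) * derivative (W (n+1))
    + (2*((n:ℝ[X])+2)) * (X * W (n+1)) + (((n:ℝ[X])+2)*((n:ℝ[X])+1)) * derivative^[n] (V (n+1)) := by
  have h : V (n+2) = (X^2-1) * V (n+1) := by rw [V, V, pow_succ]; ring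
  have h2 := iterQ n (V (n+1))
  have h4 : derivative^[n+2] (V (n+1)) = derivative (W (n+1)) := by
    rw [W, ← Function.iterate_succ_apply' derivative (n+1)]
  rw [W, h, h2, h4]
  simp only [nsmul_eq_mul, W]
  push_cast; ring

lemma two' (n : ℕ) : W (n+2) = (2*((n:ℝ[X])+2)) * (X * W (n+1))
    + (2*((n:ℝ[X])+2)*((n:ℝ[X])+1)) * derivative^[n] (V (n+1)) := by
  have h : W (n+2) = derivative^[n+1] (derivative (V (n+2))) := by
    rw [W, Function.iterate_succ_apply]
  rw [h, derivV, iterate_derivative_smul, iterX n (V (n+1))]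
  simp only [nsmul_eq_mul, smul_add, W]
  push_cast; ring

lemma three' (n : ℕ) : derivative (W (n+1)) =
    (2*((n:ℝ[X])+1)) * (X * derivative (W n)) + (2*((n:ℝ[X])+1)^2) * W n := by
  induction n with
  | zero =>
    rw [W_one, W_zero]
    simp [derivX2, map_ofNat]
    try ring
  | succ n _ =>
    have h : W (n+2) = derivative^[n+1] (derivative (V (n+2))) := by
      rw [W, Function.iterate_succ_apply]
    have h2 : derivative (W (n+2)) = derivative^[n+2] (derivative (V (n+2))) := by
      rw [h, ← Function.iterate_succ_apply' derivative (n+1), Function.iterate_succ_apply]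
    rw [h2, derivV, iterate_derivative_smul, iterX (n+1) (V (n+1))]
    have h3 : derivative^[n+2] (V (n+1)) = derivative (W (n+1)) := by
      rw [W, Function.iterate_succ_apply' derivative (n+1)]
    rw [h3]
    simp only [nsmul_eq_mul, smul_add, W]
    push_cast; ring

lemma four : ∀ n : ℕ, 2 * ((X^2-1) * derivative (W n)) = W (n+1) - (2*((n:ℝ[X])+1)) * (X * W n)
  | 0 => by rw [W_zero, W_one]; simp
  | (n+1) => by
    have A := one' n
    have B := two' n
    push_cast
    linear_combination B - 2*A

lemma bonnetW (n : ℕ) : W (n+2) =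
    2*(2*(n:ℝ[X])+3) * (X * W (n+1)) - 4*((n:ℝ[X])+1)^2 * W n := by
  have A := four (n+1)
  have B := three' n
  have C := four n
  push_cast at A C
  linear_combination 2*(X^2-1)*B + 2*((n:ℝ[X])+1)*X*C - A


def p (n : ℕ) (t : ℝ) : ℝ := (_root_.legendre n).eval t

lemma legendre_eq (n : ℕ) : _root_.legendre n = (1 / ((2:ℝ)^n * n.factorial)) • W n := rfl

lemma p_eq (n : ℕ) (t : ℝ) : p n t = (1 / ((2:ℝ)^n * n.factorial)) * (W n).eval t := by
  rw [p, legendre_eq, eval_smul, smul_eq_mul]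

lemma p0 (t : ℝ) : p 0 t = 1 := by simp [p_eq, W_zero]
lemma p1 (t : ℝ) : p 1 t = t := by simp [p_eq, W_one]; try ring

lemma pBonnet (n : ℕ) (t : ℝ) :
    ((n:ℝ)+2) * p (n+2) t = (2*(n:ℝ)+3) * (t * p (n+1) t) - ((n:ℝ)+1) * p n t := by
  have hW := congrArg (eval t) (bonnetW n)
  simp only [eval_mul, eval_sub, eval_add, eval_pow, eval_ofNat, eval_natCast, eval_X,
    eval_one, eval_smul] at hW
  have hf1 : (((n+1).factorial : ℝ)) = ((n:ℝ)+1) * (n.factorial : ℝ) := by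
    rw [Nat.factorial_succ]; push_cast; ring
  have hf2 : (((n+2).factorial : ℝ)) = ((n:ℝ)+2) * (((n+1).factorial : ℝ)) := by
    rw [Nat.factorial_succ (n+1)]; push_cast; ring
  have h2 : ((2:ℝ))^(n+1) = 2 * 2^n := by ring
  have h3 : ((2:ℝ))^(n+2) = 4 * 2^n := by ring
  have hfz : ((n.factorial : ℝ)) ≠ 0 := Nat.cast_ne_zero.mpr (Nat.factorial_ne_zero n)
  have hpz : ((2:ℝ))^n ≠ 0 := pow_ne_zero n two_ne_zero
  rw [p_eq, p_eq, p_eq, hW, hf2, hf1, h2, h3]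
  have hn1 : ((n:ℝ)+1) ≠ 0 := by positivity
  have hn2 : ((n:ℝ)+2) ≠ 0 := by positivity
  field_simp
  ring


open Finset

def a : ℕ → ℝ
  | 0 => 1
  | n+1 => a n * (2*n+1) / (2*n+2)

lemma a_zero : a 0 = 1 := rfl

lemma a_pos (n : ℕ) : 0 < a n := by
  induction n with
  | zero => norm_num [a_zero]
  | succ n ih => rw [a]; positivity

lemma a_rec (n : ℕ) : (2*(n:ℝ)+2) * a (n+1) = (2*(n:ℝ)+1) * a n := by
  rw [a]; field_simp

lemma a_le_one (n : ℕ) : a n ≤ 1 := by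
  induction n with
  | zero => simp [a_zero]
  | succ n ih =>
    rw [a]
    rw [div_le_one (by positivity)]
    nlinarith [a_pos n]

def s (n : ℕ) : ℝ := ∑ k ∈ range (n+1), a k * a (n-k)

lemma sym_sum (m : ℕ) : 2 * (∑ k ∈ range (m+1), (k:ℝ) * (a k * a (m-k))) = m * s m := by
  have hrefl := Finset.sum_range_reflect (fun k => (k:ℝ) * (a k * a (m-k))) (m+1)
  have hcongr : ∑ j ∈ range (m+1), ((m + 1 - 1 - j : ℕ):ℝ) * (a (m+1-1-j) * a (m-(m+1-1-j)))
      = ∑ j ∈ range (m+1), ((m:ℝ) - j) * (a (m-j) * a j) := by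
    refine Finset.sum_congr rfl fun j hj => ?_
    have hj' : j ≤ m := by simpa [Nat.lt_succ_iff] using hj
    have h1 : m + 1 - 1 - j = m - j := by omega
    have h2 : m - (m - j) = j := by omega
    rw [h1, h2, Nat.cast_sub hj']
  rw [hcongr] at hrefl
  have key : ∑ k ∈ range (m+1), (k:ℝ) * (a k * a (m-k))
      = ∑ j ∈ range (m+1), ((m:ℝ) - j) * (a (m-j) * a j) := hrefl.symm
  rw [two_mul]
  nth_rewrite 2 [key]
  rw [s, Finset.mul_sum, ← Finset.sum_add_distrib]
  exact Finset.sum_congr rfl fun k hk => by ring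

lemma s_eq_one (n : ℕ) : s n = 1 := by
  induction n with
  | zero => simp [s, a_zero]
  | succ n ih =>
    have hpeel : ∑ k ∈ range (n+2), (k:ℝ) * (a k * a (n+1-k))
        = (∑ k ∈ range (n+1), ((k:ℝ)+1) * (a (k+1) * a (n-k))) + 0 := by
      rw [Finset.sum_range_succ' (fun k => (k:ℝ) * (a k * a (n+1-k))) (n+1)]
      push_cast
      simp
    have hstep : ∀ k : ℕ, ((k:ℝ)+1) * (a (k+1) * a (n-k))
        = ((k:ℝ) + 1/2) * (a k * a (n-k)) := by
      intro k
      have := a_rec k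
      nlinarith [a_pos (n-k)]
    have hsum2 : ∑ k ∈ range (n+1), ((k:ℝ)+1) * (a (k+1) * a (n-k))
        = (∑ k ∈ range (n+1), (k:ℝ) * (a k * a (n-k))) + (1/2) * s n := by
      rw [s, Finset.mul_sum, ← Finset.sum_add_distrib]
      exact Finset.sum_congr rfl fun k _ => by rw [hstep k]; ring
    have hs1 := sym_sum (n+1)
    have hs0 := sym_sum n
    have hfin : ((n:ℝ)+1) * s (n+1) = ((n:ℝ)+1) * s n := by
      push_cast at hs1
      nlinarith
    have hne : ((n:ℝ)+1) ≠ 0 := by positivity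
    have := mul_left_cancel₀ hne hfin
    rw [this, ih]



def Q (n : ℕ) (θ : ℝ) : ℝ :=
  ∑ k ∈ range (n+1), a k * a (n-k) * Real.cos ((2*(k:ℝ) - (n:ℝ)) * θ)

lemma abs_Q_le_one (n : ℕ) (θ : ℝ) : |Q n θ| ≤ 1 := by
  have h1 : |Q n θ| ≤ ∑ k ∈ range (n+1), |a k * a (n-k) * Real.cos ((2*(k:ℝ) - (n:ℝ)) * θ)| :=
    Finset.abs_sum_le_sum_abs _ _
  have h2 : ∑ k ∈ range (n+1), |a k * a (n-k) * Real.cos ((2*(k:ℝ) - (n:ℝ)) * θ)|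
      ≤ ∑ k ∈ range (n+1), a k * a (n-k) := by
    refine Finset.sum_le_sum fun k _ => ?_
    rw [abs_mul, abs_mul, abs_of_pos (a_pos k), abs_of_pos (a_pos (n-k))]
    calc a k * a (n-k) * |Real.cos _| ≤ a k * a (n-k) * 1 := by
          have := Real.abs_cos_le_one ((2*(k:ℝ) - (n:ℝ)) * θ)
          have hp : 0 < a k * a (n-k) := mul_pos (a_pos k) (a_pos (n-k))
          nlinarith
      _ = a k * a (n-k) := mul_one _
  have h3 : ∑ k ∈ range (n+1), a k * a (n-k) = 1 := s_eq_one n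
  linarith

lemma a_one : a 1 = 1/2 := by rw [a, a_zero]; norm_num

lemma Q_zero (θ : ℝ) : Q 0 θ = 1 := by simp [Q, a_zero]
lemma Q_one (θ : ℝ) : Q 1 θ = Real.cos θ := by
  rw [Q, Finset.sum_range_succ, Finset.sum_range_succ, Finset.sum_range_zero]
  norm_num [a_one, a_zero]
  ring

lemma cos_mul_cos (x y : ℝ) :
    Real.cos x * Real.cos y = (Real.cos (x+y) + Real.cos (x-y))/2 := by
  rw [Real.cos_add, Real.cos_sub]; ring

lemma key_id (k i : ℕ) :
    ((k:ℝ)+(i:ℝ)+2) * (a (k+1) * a (i+1)) + ((k:ℝ)+(i:ℝ)+1) * (a k * a i)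
      = ((2*((k:ℝ)+(i:ℝ))+3)/2) * (a k * a (i+1) + a (k+1) * a i) := by
  have h1 : a (k+1) = (2*(k:ℝ)+1)/(2*(k:ℝ)+2) * a k := by
    have := a_rec k
    have hk : (2*(k:ℝ)+2) ≠ 0 := by positivity
    field_simp
    linarith
  have h2 : a (i+1) = (2*(i:ℝ)+1)/(2*(i:ℝ)+2) * a i := by
    have := a_rec i
    have hi : (2*(i:ℝ)+2) ≠ 0 := by positivity
    field_simp
    linarith
  rw [h1, h2]
  have hk : (2*(k:ℝ)+2) ≠ 0 := by positivity
  have hi : (2*(i:ℝ)+2) ≠ 0 := by positivity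
  field_simp
  ring

lemma QBonnet (n : ℕ) (θ : ℝ) :
    ((n:ℝ)+2) * Q (n+2) θ
      = (2*(n:ℝ)+3) * (Real.cos θ * Q (n+1) θ) - ((n:ℝ)+1) * Q n θ := by
  set c : ℕ → ℝ := fun j => Real.cos ((2*(j:ℝ) - ((n:ℝ)+2)) * θ) with hc
  -- T sums
  set T1 : ℝ := ∑ k ∈ range (n+1), a (k+1) * a (n+1-k) * c (k+1) with hT1
  set T2 : ℝ := ∑ k ∈ range (n+1), a k * a (n+1-k) * c (k+1) with hT2
  set T3 : ℝ := ∑ k ∈ range (n+1), a (k+1) * a (n-k) * c (k+1) with hT3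
  set T4 : ℝ := ∑ k ∈ range (n+1), a k * a (n-k) * c (k+1) with hT4
  have hA : Q (n+2) θ = T1 + a (n+2) * a 0 * c (n+2) + a 0 * a (n+2) * c 0 := by
    rw [Q, hT1]
    rw [Finset.sum_range_succ' (fun j => a j * a (n+2-j) * Real.cos ((2*(j:ℝ) - ((n+2:ℕ):ℝ)) * θ)) (n+2)]
    rw [Finset.sum_range_succ]
    simp only [hc, Nat.succ_sub_succ, Nat.sub_self, Nat.sub_zero]
    push_cast
    have harg : (2 * ((n:ℝ) + 1 + 1) - ((n:ℝ) + 2)) * θ = (2 * ((n:ℝ) + 2) - ((n:ℝ) + 2)) * θ := by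
      ring
    rw [harg]
  have hC : Q n θ = T4 := by
    rw [Q, hT4]
    refine Finset.sum_congr rfl fun k hk => ?_
    rw [hc]
    push_cast
    ring_nf
  have hB : Real.cos θ * Q (n+1) θ
      = (1/2) * (T2 + a (n+1) * a 0 * c (n+2)) + (1/2) * (T3 + a 0 * a (n+1) * c 0) := by
    have hB1 : Real.cos θ * Q (n+1) θ
        = ∑ k ∈ range (n+2), a k * a (n+1-k) * ((c (k+1) + c k)/2) := by
      rw [Q, Finset.mul_sum]
      refine Finset.sum_congr rfl fun k hk => ?_
      have hx1 : (2*((k:ℝ)+1) - ((n:ℝ)+2))*θ = (2*(k:ℝ) - ((n:ℝ)+1))*θ + θ := by ring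
      have hx2 : (2*(k:ℝ) - ((n:ℝ)+2))*θ = (2*(k:ℝ) - ((n:ℝ)+1))*θ - θ := by ring
      rw [hc]
      push_cast
      rw [hx1, hx2, ← cos_mul_cos]
      ring
    rw [hB1]
    have hsplit : ∑ k ∈ range (n+2), a k * a (n+1-k) * ((c (k+1) + c k)/2)
        = (1/2) * (∑ k ∈ range (n+2), a k * a (n+1-k) * c (k+1))
          + (1/2) * (∑ k ∈ range (n+2), a k * a (n+1-k) * c k) := by
      rw [Finset.mul_sum, Finset.mul_sum, ← Finset.sum_add_distrib]
      exact Finset.sum_congr rfl fun k _ => by ring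
    rw [hsplit]
    rw [Finset.sum_range_succ, Finset.sum_range_succ' (fun k => a k * a (n+1-k) * c k) (n+1), hT2, hT3]
    simp only [Nat.succ_sub_succ, Nat.sub_self, Nat.sub_zero]
    try ring
  have keysum : ((n:ℝ)+2) * T1 + ((n:ℝ)+1) * T4 = ((2*(n:ℝ)+3)/2) * (T2 + T3) := by
    rw [hT1, hT2, hT3, hT4, Finset.mul_sum, Finset.mul_sum, ← Finset.sum_add_distrib, mul_add,
      Finset.mul_sum, Finset.mul_sum, ← Finset.sum_add_distrib]
    refine Finset.sum_congr rfl fun k hk => ?_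
    have hk' : k ≤ n := by simpa [Nat.lt_succ_iff] using hk
    have hik : n - k + 1 = n + 1 - k := by omega
    have hik2 : ((n:ℝ)) = (k:ℝ) + ((n-k:ℕ):ℝ) := by
      rw [← Nat.cast_add]
      congr 1
      omega
    have hkey := key_id k (n-k)
    rw [hik] at hkey
    rw [hik2]
    linear_combination (c (k+1)) * hkey
  have hb : (2*(n:ℝ)+4) * a (n+2) = (2*(n:ℝ)+3) * a (n+1) := by
    have := a_rec (n+1)
    push_cast at this
    linarith
  rw [hA, hB, hC]
  linear_combination keysum + (a 0 * (c (n+2) + c 0)/2) * hb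


lemma p_eq_Q (θ : ℝ) : ∀ n : ℕ, p n (Real.cos θ) = Q n θ := by
  have key : ∀ n : ℕ, p n (Real.cos θ) = Q n θ ∧ p (n+1) (Real.cos θ) = Q (n+1) θ := by
    intro n
    induction n with
    | zero => exact ⟨by rw [p0, Q_zero], by rw [p1, Q_one]⟩
    | succ n ih =>
      refine ⟨ih.2, ?_⟩
      have hp := pBonnet n (Real.cos θ)
      have hq := QBonnet n θ
      rw [ih.1, ih.2] at hp
      have hne : ((n:ℝ)+2) ≠ 0 := by positivity
      have : ((n:ℝ)+2) * p (n+2) (Real.cos θ) = ((n:ℝ)+2) * Q (n+2) θ := by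
        rw [hp, hq]
        try ring
      exact mul_left_cancel₀ hne this
  exact fun n => (key n).1


open Complex in
lemma hasSum_Qu (θ u : ℝ) (hu0 : 0 ≤ u) (hu : u < 1) :
    HasSum (fun n => Q n θ * u ^ n)
      (‖1 - (u:ℂ) * Complex.exp ((θ:ℝ) * Complex.I)‖⁻¹) := by
  set z : ℂ := (u:ℂ) * Complex.exp ((θ:ℝ) * Complex.I) with hz
  have hzabs : ‖z‖ = u := by
    rw [hz, norm_mul, Complex.norm_real, Complex.norm_exp_ofReal_mul_I, Real.norm_eq_abs,
      _root_.abs_of_nonneg hu0, mul_one]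
  have hzlt : ‖z‖ < 1 := by rw [hzabs]; exact hu
  set f : ℕ → ℂ := fun n => ((a n : ℝ) : ℂ) * z ^ n with hf
  set g : ℕ → ℂ := fun n => ((a n : ℝ) : ℂ) * (starRingEnd ℂ z) ^ n with hg
  have hnf : ∀ n, ‖f n‖ = a n * u ^ n := by
    intro n
    rw [hf]
    simp only [norm_mul, norm_pow, Complex.norm_real, hzabs,
      Real.norm_eq_abs, _root_.abs_of_pos (a_pos n)]
  have hng : ∀ n, ‖g n‖ = a n * u ^ n := by
    intro n
    rw [hg]
    simp only [norm_mul, norm_pow, Complex.norm_real, Complex.norm_conj, hzabs,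
      Real.norm_eq_abs, _root_.abs_of_pos (a_pos n)]
  have hbound : ∀ (h : ℕ → ℂ), (∀ n, ‖h n‖ = a n * u ^ n) → Summable (fun n => ‖h n‖) := by
    intro h hh
    refine Summable.of_nonneg_of_le (fun n => norm_nonneg _) (fun n => ?_)
      (summable_geometric_of_lt_one hu0 hu)
    rw [hh n]
    have := a_le_one n
    have := a_pos n
    have : (0:ℝ) ≤ u ^ n := pow_nonneg hu0 n
    nlinarith
  have hsf : Summable (fun n => ‖f n‖) := hbound f hnf
  have hsg : Summable (fun n => ‖g n‖) := hbound g hng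
  -- Cauchy product F·F
  have hFF : HasSum (fun n => ∑ k ∈ range (n+1), f k * f (n-k)) ((∑' n, f n) * (∑' n, f n)) :=
    hasSum_sum_range_mul_of_summable_norm hsf hsf
  have hinner : ∀ n, ∑ k ∈ range (n+1), f k * f (n-k) = z ^ n := by
    intro n
    have h1 : ∀ k ∈ range (n+1), f k * f (n-k) = ((a k * a (n-k) : ℝ) : ℂ) * z ^ n := by
      intro k hk
      have hk' : k ≤ n := by simpa [Nat.lt_succ_iff] using hk
      rw [hf]
      have : z ^ k * z ^ (n-k) = z ^ n := by
        rw [← pow_add]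
        congr 1
        omega
      push_cast
      rw [← this]
      ring
    rw [Finset.sum_congr rfl h1, ← Finset.sum_mul]
    have h2 : ∑ k ∈ range (n+1), ((a k * a (n-k) : ℝ) : ℂ) = 1 := by
      rw [← Complex.ofReal_sum]
      have := s_eq_one n
      rw [s] at this
      rw [this, Complex.ofReal_one]
    rw [h2, one_mul]
  have hgeo : HasSum (fun n => z ^ n) ((1 - z)⁻¹) := hasSum_geometric_of_norm_lt_one hzlt
  have hF2 : (∑' n, f n) * (∑' n, f n) = (1 - z)⁻¹ := by
    refine HasSum.unique ?_ hgeo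
    simpa only [hinner] using hFF
  -- G = conj F
  have hgf : ∀ n, g n = (starRingEnd ℂ) (f n) := by
    intro n
    rw [hf, hg]
    simp [map_mul, map_pow, Complex.conj_ofReal]
  have hFhas : HasSum f (∑' n, f n) := (hsf.of_norm).hasSum
  have hGhas : HasSum g ((starRingEnd ℂ) (∑' n, f n)) := by
    have hmap := hFhas.map ((starRingEnd ℂ) : ℂ →+* ℂ).toAddMonoidHom continuous_star
    have : ((starRingEnd ℂ) : ℂ →+* ℂ).toAddMonoidHom ∘ f = g := funext fun n => (hgf n).symm
    rwa [this] at hmap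
  have hGconj : (∑' n, g n) = (starRingEnd ℂ) (∑' n, f n) := hGhas.tsum_eq
  -- Cauchy product F·G
  have hFG : HasSum (fun n => ∑ k ∈ range (n+1), f k * g (n-k)) ((∑' n, f n) * (∑' n, g n)) :=
    hasSum_sum_range_mul_of_summable_norm hsf hsg
  have hGG : (∑' n, g n) * (∑' n, g n) = (1 - (starRingEnd ℂ) z)⁻¹ := by
    rw [hGconj, ← map_mul, hF2, map_inv₀, map_sub, map_one]
  have hmulconj : (∑' n, f n) * (∑' n, g n) = ((Complex.normSq (∑' n, f n) : ℝ) : ℂ) := by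
    rw [hGconj, Complex.mul_conj]
  -- squared identity
  have hsq : (Complex.normSq (∑' n, f n))^2 = (‖1 - z‖⁻¹)^2 := by
    have hc : (((Complex.normSq (∑' n, f n))^2 : ℝ) : ℂ)
        = ((‖1-z‖⁻¹)^2 : ℝ) := by
      push_cast
      rw [← hmulconj]
      have : ((∑' n, f n) * (∑' n, g n))^2
          = ((∑' n, f n) * (∑' n, f n)) * ((∑' n, g n) * (∑' n, g n)) := by ring
      rw [this, hF2, hGG, ← mul_inv]
      have : (1 - z) * (1 - (starRingEnd ℂ) z) = ((Complex.normSq (1 - z) : ℝ) : ℂ) := by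
        have := Complex.mul_conj (1 - z)
        rw [← this, map_sub, map_one]
      rw [this]
      rw [← Complex.sq_norm (1-z)]
      push_cast
      ring
    exact_mod_cast hc
  have habspos : 0 < ‖1 - z‖ := by
    have hne : (1:ℂ) - z ≠ 0 := by
      intro h
      have : z = 1 := by linear_combination -h
      rw [this] at hzabs
      simp at hzabs
      rw [← hzabs] at hu
      simp at hu
    exact norm_pos_iff.mpr hne
  have hkey : Complex.normSq (∑' n, f n) = ‖1 - z‖⁻¹ := by
    have h1 : 0 ≤ Complex.normSq (∑' n, f n) := Complex.normSq_nonneg _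
    have h2 : 0 ≤ ‖1 - z‖⁻¹ := by positivity
    nlinarith [hsq]
  -- take real parts
  have hRe : HasSum (fun n => (∑ k ∈ range (n+1), f k * g (n-k)).re)
      (‖1 - z‖⁻¹) := by
    have h := Complex.hasSum_re (hmulconj ▸ hFG)
    rw [Complex.ofReal_re] at h
    rwa [hkey] at h
  -- identify terms
  have hterm : ∀ n, (∑ k ∈ range (n+1), f k * g (n-k)).re = Q n θ * u ^ n := by
    intro n
    rw [Complex.re_sum, Q, Finset.sum_mul]
    refine Finset.sum_congr rfl fun k hk => ?_
    have hk' : k ≤ n := by simpa [Nat.lt_succ_iff] using hk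
    have hconjz : (starRingEnd ℂ) z = (u:ℂ) * Complex.exp ((-θ:ℝ) * Complex.I) := by
      rw [hz, map_mul, Complex.conj_ofReal, ← Complex.exp_conj]
      congr 1
      simp [Complex.conj_ofReal]
      try push_cast
      try ring
    have hzk : z ^ k = ((u^k : ℝ) : ℂ) * Complex.exp ((((k:ℝ) * θ) : ℝ) * Complex.I) := by
      rw [hz, mul_pow, ← Complex.exp_nat_mul]
      push_cast
      ring_nf
    have hzc : ((starRingEnd ℂ) z) ^ (n-k)
        = ((u^(n-k) : ℝ) : ℂ) * Complex.exp (((-((n-k:ℕ):ℝ) * θ) : ℝ) * Complex.I) := by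
      rw [hconjz, mul_pow, ← Complex.exp_nat_mul]
      push_cast
      ring_nf
    simp only [hf, hg]
    rw [hzk, hzc]
    have hexp : Complex.exp ((((k:ℝ) * θ) : ℝ) * Complex.I)
        * Complex.exp (((-((n-k:ℕ):ℝ) * θ) : ℝ) * Complex.I)
        = Complex.exp (((2*(k:ℝ) - (n:ℝ)) * θ : ℝ) * Complex.I) := by
      rw [← Complex.exp_add]
      congr 1
      rw [Nat.cast_sub hk']
      push_cast
      ring
    have hre : ∀ (r x : ℝ), ((r:ℂ) * Complex.exp ((x:ℝ) * Complex.I)).re = r * Real.cos x := by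
      intro r x
      rw [Complex.re_ofReal_mul, Complex.exp_ofReal_mul_I_re]
    calc (((a k : ℝ):ℂ) * (((u^k : ℝ):ℂ) * Complex.exp ((((k:ℝ) * θ) : ℝ) * Complex.I))
          * (((a (n-k) : ℝ):ℂ) * (((u^(n-k) : ℝ):ℂ)
            * Complex.exp (((-((n-k:ℕ):ℝ) * θ) : ℝ) * Complex.I)))).re
        = (((a k * a (n-k) * u^n : ℝ):ℂ)
            * Complex.exp (((2*(k:ℝ) - (n:ℝ)) * θ : ℝ) * Complex.I)).re := by
          congr 1
          rw [← hexp]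
          have hun : (a k * a (n-k) * u^n : ℝ) = a k * (a (n-k) * (u^k * u^(n-k))) := by
            rw [← pow_add, show k + (n-k) = n from by omega]
            ring
          rw [hun]
          push_cast
          ring
      _ = a k * a (n-k) * Real.cos ((2*(k:ℝ) - (n:ℝ)) * θ) * u ^ n := by
          rw [hre]
          ring
  simp only [hterm] at hRe
  exact hRe


lemma tail_bound (θ u : ℝ) (hu0 : 0 ≤ u) (hu : u < 1) (c : ℕ) :
    |‖1 - (u:ℂ) * Complex.exp ((θ:ℝ) * Complex.I)‖⁻¹
      - ∑ l ∈ range (c+1), Q l θ * u ^ l| ≤ u ^ (c+1) / (1-u) := by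
  have h := hasSum_Qu θ u hu0 hu
  have hsumm := h.summable
  have htsum := h.tsum_eq
  have hsplit := Summable.sum_add_tsum_nat_add (f := fun n => Q n θ * u ^ n) (c+1) hsumm
  have hdiff : ‖1 - (u:ℂ) * Complex.exp ((θ:ℝ) * Complex.I)‖⁻¹
      - ∑ l ∈ range (c+1), Q l θ * u ^ l = ∑' k, Q (k+(c+1)) θ * u ^ (k+(c+1)) := by
    rw [← htsum, ← hsplit]
    ring
  rw [hdiff]
  have hb : ∀ k, |Q (k+(c+1)) θ * u ^ (k+(c+1))| ≤ u ^ (c+1) * u ^ k := by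
    intro k
    rw [abs_mul]
    have h1 := abs_Q_le_one (k+(c+1)) θ
    have h2 : |u ^ (k + (c+1))| = u ^ k * u ^ (c+1) := by
      rw [abs_of_nonneg (pow_nonneg hu0 _), pow_add]
    rw [h2]
    have h3 : (0:ℝ) ≤ u ^ k * u ^ (c+1) := by positivity
    nlinarith [abs_nonneg (Q (k+(c+1)) θ)]
  have hs2 : Summable (fun k => u ^ (c+1) * u ^ k) :=
    (summable_geometric_of_lt_one hu0 hu).mul_left _
  have hsabs : Summable (fun k => |Q (k+(c+1)) θ * u ^ (k+(c+1))|) :=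
    Summable.of_nonneg_of_le (fun k => abs_nonneg _) hb hs2
  have hsn : Summable (fun k => ‖Q (k+(c+1)) θ * u ^ (k+(c+1))‖) := by
    simpa only [Real.norm_eq_abs] using hsabs
  have h4 : |∑' k, Q (k+(c+1)) θ * u ^ (k+(c+1))|
      ≤ ∑' k, |Q (k+(c+1)) θ * u ^ (k+(c+1))| := by
    have := norm_tsum_le_tsum_norm hsn
    simpa only [Real.norm_eq_abs] using this
  have h5 : ∑' k, |Q (k+(c+1)) θ * u ^ (k+(c+1))| ≤ ∑' k, u ^ (c+1) * u ^ k :=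
    Summable.tsum_le_tsum hb hsabs hs2
  have h6 : ∑' k, u ^ (c+1) * u ^ k = u ^ (c+1) / (1-u) := by
    rw [tsum_mul_left, tsum_geometric_of_lt_one hu0 hu]
    ring
  linarith

end MP

open MP

/-- Truncation bound for the multipole expansion of the 3D Laplace kernel:
for `0 < ‖x‖ ≤ r₁ < r₂ = ‖y‖`,
`|1/‖y-x‖ - ∑_{l=0}^c ‖x‖^l/r₂^{l+1} P_l(cos θ)| ≤ (1/(r₂-r₁)) (r₁/r₂)^{c+1}`. -/
theorem multipole_truncation_bound (r₁ r₂ : ℝ) (c : ℕ)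
    (x y : EuclideanSpace ℝ (Fin 3))
    (hx0 : 0 < ‖x‖) (hx : ‖x‖ ≤ r₁) (h₁₂ : r₁ < r₂) (hy : ‖y‖ = r₂) :
    |1 / ‖y - x‖ -
        ∑ l ∈ Finset.range (c + 1),
          ‖x‖ ^ l / r₂ ^ (l + 1) * (legendre l).eval (⟪x, y⟫ / (‖x‖ * ‖y‖))|
      ≤ 1 / (r₂ - r₁) * (r₁ / r₂) ^ (c + 1) := by
  have hr2 : 0 < r₂ := lt_trans (lt_of_lt_of_le hx0 hx) h₁₂
  have hr2' : r₂ ≠ 0 := ne_of_gt hr2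
  have hxn : ‖x‖ ≠ 0 := ne_of_gt hx0
  set t : ℝ := ⟪x, y⟫ / (‖x‖ * ‖y‖) with htdef
  have ht : |t| ≤ 1 := abs_real_inner_div_norm_mul_norm_le_one x y
  set θ : ℝ := Real.arccos t with hθ
  have hcos : Real.cos θ = t := Real.cos_arccos (abs_le.mp ht).1 (abs_le.mp ht).2
  set u : ℝ := ‖x‖ / r₂ with hu
  have hu0 : 0 ≤ u := by positivity
  have hu1 : u < 1 := by
    rw [hu, div_lt_one hr2]
    exact lt_of_le_of_lt hx h₁₂
  set z : ℂ := (u:ℂ) * Complex.exp ((θ:ℝ) * Complex.I) with hz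
  set N : ℝ := ‖1 - z‖ with hN
  have hzabs : ‖z‖ = u := by
    rw [hz, norm_mul, Complex.norm_real, Complex.norm_exp_ofReal_mul_I, Real.norm_eq_abs,
      _root_.abs_of_nonneg hu0, mul_one]
  have hNpos : 0 < N := by
    rw [hN]
    have hne : (1:ℂ) - z ≠ 0 := by
      intro h
      have hz1 : z = 1 := by linear_combination -h
      rw [hz1] at hzabs
      simp at hzabs
      rw [← hzabs] at hu1
      simp at hu1
    exact norm_pos_iff.mpr hne
  have hinner : ⟪x, y⟫ = t * (‖x‖ * r₂) := by
    rw [htdef, hy]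
    field_simp
  have hN2 : N^2 = 1 - 2*u*t + u^2 := by
    rw [hN, Complex.sq_norm, Complex.normSq_apply, hz]
    simp only [Complex.sub_re, Complex.sub_im, Complex.one_re, Complex.one_im,
      Complex.re_ofReal_mul, Complex.im_ofReal_mul, Complex.exp_ofReal_mul_I_re,
      Complex.exp_ofReal_mul_I_im]
    have hpyth := Real.sin_sq_add_cos_sq θ
    rw [← hcos]
    nlinarith [hpyth]
  have hyx2 : ‖y - x‖^2 = r₂^2 * N^2 := by
    rw [hN2, norm_sub_sq_real, hy, real_inner_comm, hinner, hu]
    field_simp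
  have hyx : ‖y - x‖ = r₂ * N := by
    nlinarith [norm_nonneg (y - x), mul_pos hr2 hNpos]
  have hsum : ∑ l ∈ Finset.range (c+1), ‖x‖^l / r₂^(l+1) * (legendre l).eval t
      = (1/r₂) * ∑ l ∈ Finset.range (c+1), Q l θ * u^l := by
    rw [Finset.mul_sum]
    refine Finset.sum_congr rfl fun l _ => ?_
    have hp : (legendre l).eval t = Q l θ := by
      rw [← hcos]
      exact p_eq_Q θ l
    rw [hp, hu, div_pow]
    field_simp
    ring
  have hinv : 1 / ‖y - x‖ = (1/r₂) * N⁻¹ := by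
    rw [hyx]
    field_simp
  have htail := tail_bound θ u hu0 hu1 c
  rw [hinv, hsum]
  have hfactor : |(1/r₂) * N⁻¹ - (1/r₂) * ∑ l ∈ Finset.range (c+1), Q l θ * u^l|
      = (1/r₂) * |N⁻¹ - ∑ l ∈ Finset.range (c+1), Q l θ * u^l| := by
    rw [← mul_sub, abs_mul, _root_.abs_of_pos (by positivity : (0:ℝ) < 1/r₂)]
  rw [hfactor]
  have htail' : |N⁻¹ - ∑ l ∈ Finset.range (c+1), Q l θ * u^l| ≤ u^(c+1) / (1-u) := by
    rw [hN, hz]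
    exact htail
  have hb1 : (1/r₂) * |N⁻¹ - ∑ l ∈ Finset.range (c+1), Q l θ * u^l|
      ≤ (1/r₂) * (u^(c+1) / (1-u)) := by
    have h1r : (0:ℝ) ≤ 1/r₂ := by positivity
    exact mul_le_mul_of_nonneg_left htail' h1r
  refine le_trans hb1 ?_
  have heq : (1/r₂) * (u^(c+1) / (1-u)) = u^(c+1) / (r₂ - ‖x‖) := by
    rw [hu]
    field_simp
  rw [heq]
  have hnum : u^(c+1) ≤ (r₁/r₂)^(c+1) := by
    refine pow_le_pow_left₀ hu0 ?_ _
    rw [hu]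
    exact (div_le_div_iff_of_pos_right hr2).mpr hx
  have hden : (0:ℝ) < r₂ - r₁ := by linarith
  have hden2 : r₂ - r₁ ≤ r₂ - ‖x‖ := by linarith
  have hr1 : 0 < r₁ := lt_of_lt_of_le hx0 hx
  calc u^(c+1) / (r₂ - ‖x‖) ≤ (r₁/r₂)^(c+1) / (r₂ - r₁) :=
        div_le_div₀ (pow_nonneg (div_nonneg hr1.le hr2.le) _) hnum hden hden2
    _ = 1 / (r₂ - r₁) * (r₁ / r₂) ^ (c + 1) := by ring
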